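/- Let G be a finite simple graph with independence number α = α(G) and clique number ω(G). If ω(G) ≤ α(G), then the number of independent sets of size α is at most the number of independent sets of size α − 1, i.e., s_α ≤ s_{α−1}. -/

import Mathlib

open Classical in
/-- The set of stable (independent) sets of a graph, as finsets. -/
noncomputable def stableSets {V : Type*} [Fintype V] (G : SimpleGraph V) : Finset (Finset V) :=
  Finset.univ.filter (fun s : Finset V => ∀ v ∈ s, ∀ w ∈ s, ¬ G.Adj v w)

/-- The independence number: the maximum size of a stable set. -/
noncomputable def indepNum {V : Type*} [Fintype V] (G : SimpleGraph V) : ℕ :=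
  (stableSets G).sup Finset.card

open Classical in
/-- `sCount G k` is the number of stable sets of cardinality `k` in `G`. -/
noncomputable def sCount {V : Type*} [Fintype V] (G : SimpleGraph V) (k : ℕ) : ℕ :=
  ((stableSets G).filter (fun s => s.card = k)).card

/-- The clique number: the independence number of the complement. -/
noncomputable def cliqueNum {V : Type*} [Fintype V] (G : SimpleGraph V) : ℕ :=
  indepNum Gᶜ

lemma mem_stableSets_iff {V : Type*} [Fintype V] {G : SimpleGraph V} {s : Finset V} :
    s ∈ stableSets G ↔ ∀ v ∈ s, ∀ w ∈ s, ¬ G.Adj v w := by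
  simp [stableSets]

lemma stableSets_mono {V : Type*} [Fintype V] {G : SimpleGraph V} {s t : Finset V}
    (hs : s ∈ stableSets G) (h : t ⊆ s) : t ∈ stableSets G := by
  rw [mem_stableSets_iff] at *
  exact fun v hv w hw => hs v (h hv) w (h hw)

lemma card_le_indepNum {V : Type*} [Fintype V] {G : SimpleGraph V} {s : Finset V}
    (hs : s ∈ stableSets G) : s.card ≤ indepNum G :=
  Finset.le_sup hs

/-- If `ω(G) ≤ α(G)`, then `s_α ≤ s_{α-1}`. -/
theorem sCount_indepNum_le {V : Type*} [Fintype V] (G : SimpleGraph V)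
    (h : cliqueNum G ≤ indepNum G) :
    sCount G (indepNum G) ≤ sCount G (indepNum G - 1) := by
  classical
  set α := indepNum G with hα
  rcases Nat.eq_zero_or_pos α with h0 | hpos
  · simp [h0]
  unfold sCount
  set s : Finset (Finset V) := (stableSets G).filter (fun A => A.card = α) with hs
  set t : Finset (Finset V) := (stableSets G).filter (fun A => A.card = α - 1) with ht
  have key : s.card * α ≤ t.card * α := by
    apply Finset.card_mul_le_card_mul (fun A B => B ⊆ A)
    · -- each A ∈ s has exactly α subsets of size α - 1, all stable
      intro A hA
      have hAst : A ∈ stableSets G := (Finset.mem_filter.mp hA).1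
      have hAcard : A.card = α := (Finset.mem_filter.mp hA).2
      have heq : t.bipartiteAbove (fun A B => B ⊆ A) A = A.powersetCard (α - 1) := by
        ext B
        simp only [Finset.mem_bipartiteAbove, Finset.mem_powersetCard, ht, Finset.mem_filter]
        constructor
        · rintro ⟨⟨_, hc⟩, hsub⟩; exact ⟨hsub, hc⟩
        · rintro ⟨hsub, hc⟩; exact ⟨⟨stableSets_mono hAst hsub, hc⟩, hsub⟩
      rw [heq, Finset.card_powersetCard, hAcard]
      rw [Nat.choose_symm hpos, Nat.choose_one_right]
    · -- each B ∈ t is contained in at most ω ≤ α stable sets of size α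
      intro B hB
      have hBst : B ∈ stableSets G := (Finset.mem_filter.mp hB).1
      have hBcard : B.card = α - 1 := (Finset.mem_filter.mp hB).2
      set X : Finset V := Finset.univ.filter
        (fun v => v ∉ B ∧ insert v B ∈ stableSets G) with hX
      have hXclique : X ∈ stableSets Gᶜ := by
        rw [mem_stableSets_iff]
        intro v hv w hw hadj
        obtain ⟨hne, hnadj⟩ := hadj
        simp only [hX, Finset.mem_filter] at hv hw
        obtain ⟨-, hvB, hvst⟩ := hv
        obtain ⟨-, hwB, hwst⟩ := hw
        -- insert v (insert w B) is stable of size α + 1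
        have hst : insert v (insert w B) ∈ stableSets G := by
          rw [mem_stableSets_iff] at *
          intro a ha b hb
          simp only [Finset.mem_insert] at ha hb
          rcases ha with rfl | ha <;> rcases hb with rfl | hb
          · exact fun hc => G.irrefl hc
          · rcases hb with rfl | hb
            · exact hnadj
            · exact hvst a (Finset.mem_insert_self _ _) b (Finset.mem_insert_of_mem hb)
          · rcases ha with rfl | ha
            · exact fun hc => hnadj hc.symm
            · exact fun hc => hvst b (Finset.mem_insert_self _ _) a
                (Finset.mem_insert_of_mem ha) hc.symm
          · exact hwst a (Finset.mem_insert.mpr ha) b (Finset.mem_insert.mpr hb)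
        have hcard : (insert v (insert w B)).card = α + 1 := by
          rw [Finset.card_insert_of_notMem, Finset.card_insert_of_notMem hwB, hBcard]
          · omega
          · simp only [Finset.mem_insert]
            rintro (rfl | hvB') <;> [exact hne rfl; exact hvB hvB']
        have := card_le_indepNum hst
        omega
      have hXcard : X.card ≤ α := le_trans (card_le_indepNum hXclique) h
      refine le_trans (le_trans (Finset.card_le_card ?_) (Finset.card_image_le (s := X)
        (f := fun v => insert v B))) hXcard
      intro A hA
      simp only [Finset.mem_bipartiteBelow, hs, Finset.mem_filter] at hA
      obtain ⟨⟨hAst, hAcard⟩, hsub⟩ := hA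
      have hne : (A \ B).Nonempty := by
        rw [← Finset.card_pos, Finset.card_sdiff, Finset.inter_eq_left.mpr hsub, hAcard, hBcard]; omega
      obtain ⟨v, hv⟩ := hne
      have hvA := (Finset.mem_sdiff.mp hv).1
      have hvB := (Finset.mem_sdiff.mp hv).2
      have hAeq : A = insert v B := by
        apply (Finset.eq_of_subset_of_card_le (Finset.insert_subset hvA hsub) ?_).symm
        rw [Finset.card_insert_of_notMem hvB, hAcard, hBcard]; omega
      rw [Finset.mem_image]
      refine ⟨v, ?_, hAeq.symm⟩
      simp only [hX, Finset.mem_filter]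
      exact ⟨Finset.mem_univ _, hvB, hAeq ▸ hAst⟩
  exact Nat.le_of_mul_le_mul_right key hpos
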